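/- For density matrices ρ, σ with σ positive definite and any α ∈ (0,1), the Bures χ²-divergence is bounded above by the α-divergence: ⟨ρ-σ, Ω_Bures(ρ-σ)⟩ ≤ tr[(ρ-σ)σ^{-α}(ρ-σ)σ^{α-1}]. -/

import Mathlib

open Matrix
open scoped ComplexOrder

/-- The trace norm `‖A‖₁ = tr √(A†A)` of a complex matrix. -/
noncomputable def traceNorm {d : ℕ} (A : Matrix (Fin d) (Fin d) ℂ) : ℝ :=
  (((Matrix.posSemidef_conjTranspose_mul_self A).isHermitian.eigenvectorUnitary.1 *
      Matrix.diagonal (fun i => ((√((Matrix.posSemidef_conjTranspose_mul_self A).isHermitian.eigenvalues i) : ℝ) : ℂ)) *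
      (star (Matrix.posSemidef_conjTranspose_mul_self A).isHermitian.eigenvectorUnitary :
        Matrix (Fin d) (Fin d) ℂ)).trace).re

/-- Real matrix power of a Hermitian matrix via the spectral decomposition
(defined as `0` on the kernel for negative exponents, i.e. a pseudo-inverse,
and as the junk value `0` for non-Hermitian input). -/
noncomputable def mrpow {d : ℕ} (σ : Matrix (Fin d) (Fin d) ℂ) (α : ℝ) :
    Matrix (Fin d) (Fin d) ℂ :=
  if hσ : σ.IsHermitian then
    (hσ.eigenvectorUnitary : Matrix (Fin d) (Fin d) ℂ) *
      Matrix.diagonal (fun i => ((hσ.eigenvalues i ^ α : ℝ) : ℂ)) *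
      star (hσ.eigenvectorUnitary : Matrix (Fin d) (Fin d) ℂ)
  else 0

lemma two_le_aux (x y β : ℝ) (hx : 0 < x) (hy : 0 < y) :
    2 ≤ x ^ β * y ^ (-β) + x ^ (-β) * y ^ β := by
  have h1 : x ^ β * x ^ (-β) = 1 := by
    rw [← Real.rpow_add hx]; simp
  have h2 : y ^ β * y ^ (-β) = 1 := by
    rw [← Real.rpow_add hy]; simp
  have p1 : 0 < x ^ β := Real.rpow_pos_of_pos hx β
  have p2 : 0 < y ^ β := Real.rpow_pos_of_pos hy β
  have p3 : 0 < x ^ (-β) := Real.rpow_pos_of_pos hx (-β)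
  have p4 : 0 < y ^ (-β) := Real.rpow_pos_of_pos hy (-β)
  nlinarith [sq_nonneg (x ^ β * y ^ (-β) - 1), mul_pos p3 p4, mul_pos p1 p4]

lemma key_scalar (x y α : ℝ) (hx : 0 < x) (hy : 0 < y) :
    2 / (x + y) ≤ (y ^ (-α) * x ^ (α - 1) + x ^ (-α) * y ^ (α - 1)) / 2 := by
  have e1 : x ^ α = x * x ^ (α - 1) := by
    rw [show α = 1 + (α - 1) by ring, Real.rpow_add hx, Real.rpow_one]; ring_nf
  have e2 : y ^ α = y * y ^ (α - 1) := by
    rw [show α = 1 + (α - 1) by ring, Real.rpow_add hy, Real.rpow_one]; ring_nf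
  have e3 : x ^ (1 - α) = x * x ^ (-α) := by
    rw [show (1 : ℝ) - α = 1 + (-α) by ring, Real.rpow_add hx, Real.rpow_one]
  have e4 : y ^ (1 - α) = y * y ^ (-α) := by
    rw [show (1 : ℝ) - α = 1 + (-α) by ring, Real.rpow_add hy, Real.rpow_one]
  have t1 : 2 ≤ x ^ α * y ^ (-α) + x ^ (-α) * y ^ α := two_le_aux x y α hx hy
  have t2 : 2 ≤ x ^ (1 - α) * y ^ (-(1 - α)) + x ^ (-(1 - α)) * y ^ (1 - α) :=
    two_le_aux x y (1 - α) hx hy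
  have hneg : -(1 - α) = α - 1 := by ring
  rw [hneg] at t2
  rw [e1, e2] at t1
  rw [e3, e4] at t2
  have key : 4 ≤ (x + y) * (y ^ (-α) * x ^ (α - 1) + x ^ (-α) * y ^ (α - 1)) := by
    nlinarith [t1, t2]
  rw [div_le_div_iff₀ (by positivity) (by norm_num : (0:ℝ) < 2)]
  nlinarith [key]

/-- For density matrices `ρ, σ` with `σ` positive definite and `α ∈ (0,1)`,
the Bures χ²-divergence is bounded above by the mean α-divergence:
`⟨ρ-σ, Ω_Bures(ρ-σ)⟩ ≤ tr[(ρ-σ)σ^{-α}(ρ-σ)σ^{α-1}]`, where `Y = Ω_Bures(ρ-σ)` solves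
`σY + Yσ = 2(ρ-σ)`. -/
theorem chi_sq_bures_le_chi_sq_alpha (d : ℕ) (ρ σ Y : Matrix (Fin d) (Fin d) ℂ)
    (α : ℝ) (hα : α ∈ Set.Ioo (0 : ℝ) 1)
    (hρ : ρ.PosSemidef) (hρtr : ρ.trace = 1)
    (hσ : σ.PosDef) (hσtr : σ.trace = 1)
    (hY : σ * Y + Y * σ = (2 : ℂ) • (ρ - σ)) :
    (((ρ - σ)ᴴ * Y).trace).re ≤
      (((ρ - σ) * mrpow σ (-α) * (ρ - σ) * mrpow σ (α - 1)).trace).re := by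
  obtain ⟨hα0, hα1⟩ := hα
  have hH : σ.IsHermitian := hσ.1
  set Δ : Matrix (Fin d) (Fin d) ℂ := ρ - σ with hΔdef
  have hΔH : Δ.IsHermitian := hρ.1.sub hH
  set U : Matrix (Fin d) (Fin d) ℂ := (hH.eigenvectorUnitary : Matrix (Fin d) (Fin d) ℂ) with hUdef
  have hU1 : star U * U = 1 := Matrix.mem_unitaryGroup_iff'.mp hH.eigenvectorUnitary.2
  have hU2 : U * star U = 1 := Matrix.mem_unitaryGroup_iff.mp hH.eigenvectorUnitary.2
  set l : Fin d → ℝ := hH.eigenvalues with hldef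
  have hlpos : ∀ i, 0 < l i := fun i => hσ.eigenvalues_pos i
  set D : Matrix (Fin d) (Fin d) ℂ := Matrix.diagonal (fun i => (l i : ℂ)) with hDdef
  have hspec : σ = U * D * star U := hH.spectral_theorem
  set M : Matrix (Fin d) (Fin d) ℂ := star U * Δ * U with hMdef
  set Z : Matrix (Fin d) (Fin d) ℂ := star U * Y * U with hZdef
  have hMH : ∀ i j, M j i = star (M i j) := by
    intro i j
    have hM : Mᴴ = M := by
      rw [hMdef]
      calc (star U * Δ * U)ᴴ = Uᴴ * Δᴴ * (star U)ᴴ := by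
            rw [conjTranspose_mul, conjTranspose_mul, mul_assoc]
        _ = star U * Δ * U := by
            rw [hΔH.eq, Matrix.star_eq_conjTranspose, conjTranspose_conjTranspose]
    calc M j i = Mᴴ j i := by rw [hM]
      _ = star (M i j) := rfl
  have hσU : σ * U = U * D := by
    rw [hspec, mul_assoc, hU1, mul_one]
  have hUσ : star U * σ = D * star U := by
    rw [hspec, ← mul_assoc, ← mul_assoc, hU1, one_mul]
  have hZM : D * Z + Z * D = (2 : ℂ) • M := by
    have h0 : star U * (σ * Y + Y * σ) * U = star U * ((2 : ℂ) • Δ) * U := by rw [hY]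
    calc D * Z + Z * D
        = (D * star U) * Y * U + star U * Y * (σ * U) := by
          rw [hZdef, hσU]; noncomm_ring
      _ = star U * (σ * Y + Y * σ) * U := by rw [← hUσ]; noncomm_ring
      _ = star U * ((2 : ℂ) • Δ) * U := h0
      _ = (2 : ℂ) • M := by rw [hMdef, Matrix.mul_smul, Matrix.smul_mul]
  have hne : ∀ i j : Fin d, ((l i : ℂ) + (l j : ℂ)) ≠ 0 := by
    intro i j
    rw [← Complex.ofReal_add]
    exact Complex.ofReal_ne_zero.mpr (by have := hlpos i; have := hlpos j; linarith)
  have hZval : ∀ i j, Z i j = 2 * M i j / ((l i : ℂ) + (l j : ℂ)) := by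
    intro i j
    have h1 := congrFun (congrFun hZM i) j
    rw [hDdef] at h1
    simp only [Matrix.add_apply, Matrix.smul_apply, Matrix.diagonal_mul,
      Matrix.mul_diagonal, smul_eq_mul] at h1
    rw [eq_div_iff (hne i j)]
    linear_combination h1
  have hΔeq : U * M * star U = Δ := by
    simp only [hMdef, ← mul_assoc]
    rw [hU2, one_mul, mul_assoc, hU2, mul_one]
  have hYeq : U * Z * star U = Y := by
    simp only [hZdef, ← mul_assoc]
    rw [hU2, one_mul, mul_assoc, hU2, mul_one]
  have collapse : ∀ A B : Matrix (Fin d) (Fin d) ℂ,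
      (U * A * star U) * (U * B * star U) = U * (A * B) * star U := by
    intro A B
    calc (U * A * star U) * (U * B * star U)
        = U * (A * ((star U * U) * B)) * star U := by noncomm_ring
      _ = U * (A * B) * star U := by rw [hU1, one_mul]
  have htrace_conj : ∀ A : Matrix (Fin d) (Fin d) ℂ,
      (U * A * star U).trace = A.trace := by
    intro A
    rw [Matrix.trace_mul_cycle, hU1, one_mul]
  have hL : ((Δᴴ * Y).trace).re
      = ∑ i, ∑ j, 2 * Complex.normSq (M i j) / (l j + l i) := by
    rw [hΔH.eq, ← hΔeq, ← hYeq, collapse, htrace_conj]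
    rw [Matrix.trace]
    simp only [Matrix.diag_apply, Matrix.mul_apply]
    rw [Complex.re_sum]
    refine Finset.sum_congr rfl fun i _ => ?_
    rw [Complex.re_sum]
    refine Finset.sum_congr rfl fun j _ => ?_
    rw [hZval j i, hMH i j]
    have hms : M i j * star (M i j) = (Complex.normSq (M i j) : ℂ) := Complex.mul_conj _
    have hcalc : M i j * (2 * star (M i j) / ((l j : ℂ) + (l i : ℂ)))
        = ((2 * Complex.normSq (M i j) / (l j + l i) : ℝ) : ℂ) := by
      push_cast
      rw [mul_div_assoc']
      congr 1
      linear_combination 2 * hms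
    rw [hcalc, Complex.ofReal_re]
  have hmr : ∀ β : ℝ, mrpow σ β
      = U * Matrix.diagonal (fun i => ((l i ^ β : ℝ) : ℂ)) * star U := by
    intro β
    simp only [mrpow, dif_pos hH]; rfl
  have hR : ((Δ * mrpow σ (-α) * Δ * mrpow σ (α - 1)).trace).re
      = ∑ i, ∑ j, Complex.normSq (M i j) * l j ^ (-α) * l i ^ (α - 1) := by
    rw [hmr, hmr, ← hΔeq, collapse, collapse, collapse, htrace_conj]
    rw [Matrix.trace, Complex.re_sum]
    refine Finset.sum_congr rfl fun i _ => ?_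
    rw [Matrix.diag_apply, Matrix.mul_diagonal, Matrix.mul_apply, Finset.sum_mul,
      Complex.re_sum]
    refine Finset.sum_congr rfl fun j _ => ?_
    rw [Matrix.mul_diagonal, hMH i j]
    have hms : M i j * star (M i j) = (Complex.normSq (M i j) : ℂ) := Complex.mul_conj _
    have hcalc : M i j * ((l j ^ (-α) : ℝ) : ℂ) * star (M i j) * ((l i ^ (α - 1) : ℝ) : ℂ)
        = ((Complex.normSq (M i j) * l j ^ (-α) * l i ^ (α - 1) : ℝ) : ℂ) := by
      push_cast
      linear_combination (((l j ^ (-α) : ℝ) : ℂ) * ((l i ^ (α - 1) : ℝ) : ℂ)) * hms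
    rw [hcalc, Complex.ofReal_re]
  rw [hL, hR]
  have hmsymm : ∀ i j, Complex.normSq (M j i) = Complex.normSq (M i j) := by
    intro i j
    rw [hMH i j]
    exact Complex.normSq_conj _
  have hsymm : ∑ i, ∑ j, Complex.normSq (M i j) * l j ^ (-α) * l i ^ (α - 1)
      = ∑ i, ∑ j, Complex.normSq (M i j) * l i ^ (-α) * l j ^ (α - 1) := by
    rw [Finset.sum_comm]
    refine Finset.sum_congr rfl fun i _ => Finset.sum_congr rfl fun j _ => ?_
    rw [hmsymm]
  have pt : ∀ i j, 2 * Complex.normSq (M i j) / (l j + l i)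
      ≤ (Complex.normSq (M i j) * l j ^ (-α) * l i ^ (α - 1)
        + Complex.normSq (M i j) * l i ^ (-α) * l j ^ (α - 1)) / 2 := by
    intro i j
    have hk := key_scalar (l i) (l j) α (hlpos i) (hlpos j)
    have hm : 0 ≤ Complex.normSq (M i j) := Complex.normSq_nonneg _
    calc 2 * Complex.normSq (M i j) / (l j + l i)
        = Complex.normSq (M i j) * (2 / (l i + l j)) := by rw [add_comm (l j)]; ring
      _ ≤ Complex.normSq (M i j)
          * ((l j ^ (-α) * l i ^ (α - 1) + l i ^ (-α) * l j ^ (α - 1)) / 2) :=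
          mul_le_mul_of_nonneg_left hk hm
      _ = (Complex.normSq (M i j) * l j ^ (-α) * l i ^ (α - 1)
          + Complex.normSq (M i j) * l i ^ (-α) * l j ^ (α - 1)) / 2 := by ring
  calc ∑ i, ∑ j, 2 * Complex.normSq (M i j) / (l j + l i)
      ≤ ∑ i, ∑ j, (Complex.normSq (M i j) * l j ^ (-α) * l i ^ (α - 1)
        + Complex.normSq (M i j) * l i ^ (-α) * l j ^ (α - 1)) / 2 :=
        Finset.sum_le_sum fun i _ => Finset.sum_le_sum fun j _ => pt i j
    _ = ((∑ i, ∑ j, Complex.normSq (M i j) * l j ^ (-α) * l i ^ (α - 1))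
        + ∑ i, ∑ j, Complex.normSq (M i j) * l i ^ (-α) * l j ^ (α - 1)) / 2 := by
        simp only [← Finset.sum_div, ← Finset.sum_add_distrib]
    _ = ∑ i, ∑ j, Complex.normSq (M i j) * l j ^ (-α) * l i ^ (α - 1) := by
        rw [← hsymm]
        ring
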